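/- Let v ∈ C¹([0,T]) with v(t) ≥ ς₀ > 0, and let Φ₀, Φ̂₁ ∈ C¹([0,T]). Define Π̂₁(ζ,t) := (Φ̂₁(t) + (Φ₀(t)v′(t)/v(t)² − Φ₀′(t)/v(t))·ζ + (Φ₀(t)v′(t)/(2v(t)))·ζ²)·exp(−v(t)ζ). Then for each fixed t, Π̂₁ satisfies ∂²Π̂₁/∂ζ² + v(t)·∂Π̂₁/∂ζ = ∂/∂t (Φ₀(t)·exp(−v(t)ζ)) on (0,∞), with Π̂₁(0,t) = Φ̂₁(t). -/

import Mathlib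

lemma hasDerivAt_quad_exp (a c0 c1 c2 ζ : ℝ) :
    HasDerivAt (fun ζ => (c0 + c1*ζ + c2*ζ^2) * Real.exp (-a*ζ))
      (((c1 - a*c0) + (2*c2 - a*c1)*ζ + (-(a*c2))*ζ^2) * Real.exp (-a*ζ)) ζ := by
  have h1 : HasDerivAt (fun ζ : ℝ => -a*ζ) (-a) ζ := by
    simpa using (hasDerivAt_id ζ).const_mul (-a)
  have he := h1.exp
  have hp : HasDerivAt (fun ζ : ℝ => c0 + c1*ζ + c2*ζ^2) (c1 + 2*c2*ζ) ζ := by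
    have := ((hasDerivAt_const ζ c0).add ((hasDerivAt_id ζ).const_mul c1)).add
      (((hasDerivAt_pow 2 ζ)).const_mul c2)
    exact this.congr_deriv (by norm_num; ring)
  have := hp.mul he
  exact this.congr_deriv (by ring)

lemma deriv_quad_exp (a c0 c1 c2 : ℝ) :
    deriv (fun ζ => (c0 + c1*ζ + c2*ζ^2) * Real.exp (-a*ζ))
      = fun ζ => ((c1 - a*c0) + (2*c2 - a*c1)*ζ + (-(a*c2))*ζ^2) * Real.exp (-a*ζ) := by
  funext ζ
  exact (hasDerivAt_quad_exp a c0 c1 c2 ζ).deriv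

/-- the explicit first-order boundary-layer corrector
`Π̂₁(ζ,t) = (Φ̂₁(t) + (Φ₀(t)v′(t)/v(t)² − Φ₀′(t)/v(t))ζ + (Φ₀(t)v′(t)/(2v(t)))ζ²)·e^{−v(t)ζ}`
solves `∂²Π̂₁/∂ζ² + v(t)∂Π̂₁/∂ζ = ∂_t(Φ₀(t)e^{−v(t)ζ})` on `(0,∞)` with
`Π̂₁(0,t) = Φ̂₁(t)`. -/
theorem stmt_1 (T ς₀ : ℝ) (hT : 0 < T) (hς : 0 < ς₀)
    (v Φ₀ Φ₁ : ℝ → ℝ)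
    (hv : ContDiff ℝ 1 v) (hvb : ∀ t ∈ Set.Icc (0:ℝ) T, ς₀ ≤ v t)
    (hΦ₀ : ContDiff ℝ 1 Φ₀) (hΦ₁ : ContDiff ℝ 1 Φ₁)
    (P1 : ℝ → ℝ → ℝ)
    (hP1 : ∀ ζ t, P1 ζ t =
      (Φ₁ t + (Φ₀ t * deriv v t / (v t) ^ 2 - deriv Φ₀ t / v t) * ζ
        + (Φ₀ t * deriv v t / (2 * v t)) * ζ ^ 2) * Real.exp (-(v t) * ζ)) :
    ∀ t ∈ Set.Icc (0:ℝ) T,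
      (∀ ζ ∈ Set.Ioi (0:ℝ),
          deriv (deriv (fun ζ' => P1 ζ' t)) ζ + v t * deriv (fun ζ' => P1 ζ' t) ζ
            = deriv (fun τ => Φ₀ τ * Real.exp (-(v τ) * ζ)) t) ∧
      P1 0 t = Φ₁ t := by
  intro t ht
  have hva : (0:ℝ) < v t := lt_of_lt_of_le hς (hvb t ht)
  have hvne : v t ≠ 0 := ne_of_gt hva
  set a := v t with ha
  set c0 := Φ₁ t with hc0
  set c1 := Φ₀ t * deriv v t / (v t) ^ 2 - deriv Φ₀ t / v t with hc1
  set c2 := Φ₀ t * deriv v t / (2 * v t) with hc2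
  have hfun : (fun ζ' => P1 ζ' t) = fun ζ => (c0 + c1*ζ + c2*ζ^2) * Real.exp (-a*ζ) := by
    funext ζ; rw [hP1]
  constructor
  · intro ζ _
    -- compute t-derivative of RHS
    have hvd : HasDerivAt v (deriv v t) t :=
      ((hv.differentiable one_ne_zero) t).hasDerivAt
    have hΦd : HasDerivAt Φ₀ (deriv Φ₀ t) t :=
      ((hΦ₀.differentiable one_ne_zero) t).hasDerivAt
    have hexp : HasDerivAt (fun τ => Real.exp (-(v τ) * ζ))
        (Real.exp (-(v t) * ζ) * (-(deriv v t) * ζ)) t := by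
      exact ((hvd.neg).mul_const ζ).exp
    have hrhs : HasDerivAt (fun τ => Φ₀ τ * Real.exp (-(v τ) * ζ))
        (deriv Φ₀ t * Real.exp (-(v t) * ζ)
          + Φ₀ t * (Real.exp (-(v t) * ζ) * (-(deriv v t) * ζ))) t := hΦd.mul hexp
    rw [hrhs.deriv, hfun, deriv_quad_exp, deriv_quad_exp]
    -- now pure algebra
    have : Real.exp (-(v t) * ζ) = Real.exp (-a * ζ) := by rw [ha]
    rw [this]
    rw [hc0, hc1, hc2, ha]
    field_simp [show v t ≠ 0 from hvne]
    ring
  · rw [hP1]; simp [hc0]
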